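/- Let S be a numerical semigroup on a compound sequence and i ∈ [0,p]. The Apéry set Ap(S, n_i) = {n ∈ S : n − n_i ∉ S} equals {Σ_j u_j n_j : u ∈ ℕ^{p+1}, u_j < b_{j+1} for j < i, u_i = 0, u_j < a_j for j > i}. -/

import Mathlib

open Finset

private lemma aux_prod_cons (a : ℕ → ℕ) {t p : ℕ} (h2 : t ≤ p) :
    ∏ j ∈ Icc t p, a j = a t * ∏ j ∈ Icc (t+1) p, a j := by
  rw [← Finset.mul_prod_erase (Icc t p) a (Finset.mem_Icc.mpr ⟨le_refl t, h2⟩),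
    Finset.Icc_erase_left]
  congr 1
  exact (Finset.Icc_add_one_left_eq_Ioc t p).symm ▸ rfl

private lemma aux_key (p : ℕ) (a b n : ℕ → ℕ)
    (hn : ∀ i, i ≤ p → n i = (∏ j ∈ Finset.Icc 1 i, b j) * ∏ j ∈ Finset.Icc (i+1) p, a j)
    {s : ℕ} (hs : s < p) : a (s+1) * n (s+1) = b (s+1) * n s := by
  rw [hn (s+1) hs, hn s (le_of_lt hs)]
  rw [Finset.prod_Icc_succ_top (by omega) b]
  rw [aux_prod_cons a (by omega : s + 1 ≤ p)]
  ring

private lemma aux_npos (p : ℕ) (a b n : ℕ → ℕ)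
    (ha : ∀ i, 1 ≤ i → i ≤ p → 2 ≤ a i ∧ a i < b i)
    (hn : ∀ i, i ≤ p → n i = (∏ j ∈ Finset.Icc 1 i, b j) * ∏ j ∈ Finset.Icc (i+1) p, a j)
    {t : ℕ} (ht : t ≤ p) : 0 < n t := by
  rw [hn t ht]
  apply Nat.mul_pos
  · apply Finset.prod_pos
    intro j hj
    obtain ⟨h1, h2⟩ := Finset.mem_Icc.mp hj
    have := ha j h1 (le_trans h2 ht)
    omega
  · apply Finset.prod_pos
    intro j hj
    obtain ⟨h1, h2⟩ := Finset.mem_Icc.mp hj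
    have := ha j (by omega) h2
    omega

private lemma aux_swap (n : ℕ → ℕ) (N : ℕ) (y : ℕ → ℕ) (s t c d : ℕ)
    (hs : s < N) (ht : t < N) (hst : s ≠ t)
    (h : c * n s + d * n t = y s * n s + y t * n t) :
    ∑ j ∈ range N, (if j = s then c else if j = t then d else y j) * n j
      = ∑ j ∈ range N, y j * n j := by
  have hsmem : s ∈ range N := mem_range.mpr hs
  have htmem : t ∈ (range N).erase s := Finset.mem_erase.mpr ⟨Ne.symm hst, mem_range.mpr ht⟩
  rw [← Finset.add_sum_erase (range N)
      (fun j => (if j = s then c else if j = t then d else y j) * n j) hsmem,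
    ← Finset.add_sum_erase ((range N).erase s)
      (fun j => (if j = s then c else if j = t then d else y j) * n j) htmem,
    ← Finset.add_sum_erase (range N) (fun j => y j * n j) hsmem,
    ← Finset.add_sum_erase ((range N).erase s) (fun j => y j * n j) htmem]
  have he : ∑ j ∈ ((range N).erase s).erase t,
      (if j = s then c else if j = t then d else y j) * n j
      = ∑ j ∈ ((range N).erase s).erase t, y j * n j := by
    apply Finset.sum_congr rfl
    intro j hj
    have h1 : j ≠ t := Finset.ne_of_mem_erase hj
    have h2 : j ≠ s := Finset.ne_of_mem_erase (Finset.mem_of_mem_erase hj)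
    rw [if_neg h2, if_neg h1]
  rw [he, if_pos (rfl : s = s), if_neg (Ne.symm hst), if_pos (rfl : t = t),
    ← add_assoc, ← add_assoc, h]

private lemma aux_exists (p : ℕ) (a b n : ℕ → ℕ)
    (ha : ∀ i, 1 ≤ i → i ≤ p → 2 ≤ a i ∧ a i < b i)
    (hn : ∀ i, i ≤ p → n i = (∏ j ∈ Finset.Icc 1 i, b j) * ∏ j ∈ Finset.Icc (i+1) p, a j)
    (i : ℕ) (hip : i ≤ p) (x : ℕ → ℕ) :
    ∃ u : ℕ → ℕ, (∀ j, j < i → u j < b (j+1)) ∧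
      (∀ j, i < j → j ≤ p → u j < a j) ∧ (∀ j, p < j → u j = 0) ∧
      ∑ j ∈ range (p+1), u j * n j = ∑ j ∈ range (p+1), x j * n j := by
  have upper : ∀ k : ℕ, ∃ y : ℕ → ℕ,
      (∑ j ∈ range (p+1), y j * n j = ∑ j ∈ range (p+1), x j * n j) ∧
      ∀ j, p - k < j → j ≤ p → y j < a j := by
    intro k
    induction k with
    | zero => exact ⟨x, rfl, fun j h1 h2 => absurd h2 (by omega)⟩
    | succ k ih =>
      obtain ⟨y, hy, hyb⟩ := ih
      by_cases hk : k < p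
      · set t := p - k with htdef
        have ht1 : 1 ≤ t := by omega
        have ht2 : t ≤ p := by omega
        have ha' := ha t ht1 ht2
        refine ⟨fun j => if j = t then y t % a t
            else if j = t - 1 then y (t-1) + (y t / a t) * b t else y j, ?_, ?_⟩
        · rw [← hy]
          apply aux_swap n (p+1) y t (t-1) _ _ (by omega) (by omega) (by omega)
          have hkey : a t * n t = b t * n (t-1) := by
            have hkey' := aux_key p a b n hn (s := t-1) (by omega)
            have he : t - 1 + 1 = t := by omega
            rwa [he] at hkey'
          have h0 : a t * (y t / a t) + y t % a t = y t := Nat.div_add_mod (y t) (a t)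
          have hy2 : y t * n t = (y t % a t) * n t + (y t / a t) * (b t * n (t-1)) := by
            rw [← hkey]
            calc y t * n t = (a t * (y t / a t) + y t % a t) * n t := by rw [h0]
              _ = (y t % a t) * n t + (y t / a t) * (a t * n t) := by ring
          rw [hy2]; ring
        · intro j h1 h2
          dsimp only
          by_cases hjt : j = t
          · rw [if_pos hjt, hjt]
            exact Nat.mod_lt _ (by omega)
          · have hj3 : t < j := by omega
            rw [if_neg hjt, if_neg (by omega : j ≠ t - 1)]
            exact hyb j (by omega) h2
      · exact ⟨y, hy, fun j h1 h2 => hyb j (by omega) h2⟩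
  have lower : ∀ t, t ≤ i → ∀ y : ℕ → ℕ, (∀ j, i < j → j ≤ p → y j < a j) →
      ∃ z : ℕ → ℕ, (∑ j ∈ range (p+1), z j * n j = ∑ j ∈ range (p+1), y j * n j) ∧
        (∀ j, j < t → z j < b (j+1)) ∧ (∀ j, i < j → j ≤ p → z j < a j) := by
    intro t
    induction t with
    | zero => exact fun _ y hy => ⟨y, rfl, fun j h => absurd h (by omega), hy⟩
    | succ t ih =>
      intro ht y hy
      obtain ⟨z, hz, hzl, hzu⟩ := ih (by omega) y hy
      have ht1 : t + 1 ≤ p := by omega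
      have ha' := ha (t+1) (by omega) ht1
      refine ⟨fun j => if j = t then z t % b (t+1)
          else if j = t + 1 then z (t+1) + (z t / b (t+1)) * a (t+1) else z j, ?_, ?_, ?_⟩
      · rw [← hz]
        apply aux_swap n (p+1) z t (t+1) _ _ (by omega) (by omega) (by omega)
        have hkey := aux_key p a b n hn (s := t) (by omega)
        have h0 : b (t+1) * (z t / b (t+1)) + z t % b (t+1) = z t :=
          Nat.div_add_mod (z t) (b (t+1))
        have hz2 : z t * n t = (z t % b (t+1)) * n t + (z t / b (t+1)) * (a (t+1) * n (t+1)) := by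
          rw [hkey]
          calc z t * n t = (b (t+1) * (z t / b (t+1)) + z t % b (t+1)) * n t := by rw [h0]
            _ = (z t % b (t+1)) * n t + (z t / b (t+1)) * (b (t+1) * n t) := by ring
        rw [hz2]; ring
      · intro j hj
        dsimp only
        by_cases hjt : j = t
        · rw [if_pos hjt, hjt]
          exact Nat.mod_lt _ (by omega)
        · rw [if_neg hjt, if_neg (by omega : j ≠ t + 1)]
          exact hzl j (by omega)
      · intro j h1 h2
        dsimp only
        rw [if_neg (by omega : j ≠ t), if_neg (by omega : j ≠ t + 1)]
        exact hzu j h1 h2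
  obtain ⟨y, hy, hyb⟩ := upper (p - i)
  have hyb' : ∀ j, i < j → j ≤ p → y j < a j := fun j h1 h2 => hyb j (by omega) h2
  obtain ⟨z, hz, hzl, hzu⟩ := lower i le_rfl y hyb'
  refine ⟨fun j => if j ≤ p then z j else 0, ?_, ?_, ?_, ?_⟩
  · intro j hj
    dsimp only
    rw [if_pos (by omega : j ≤ p)]
    exact hzl j hj
  · intro j h1 h2
    dsimp only
    rw [if_pos h2]
    exact hzu j h1 h2
  · intro j hj
    dsimp only
    rw [if_neg (by omega : ¬ j ≤ p)]
  · have hcong : ∀ j ∈ range (p+1), (if j ≤ p then z j else 0) * n j = z j * n j := by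
      intro j hj
      have := mem_range.mp hj
      rw [if_pos (by omega)]
    rw [Finset.sum_congr rfl hcong, hz, hy]

private lemma aux_unique (p : ℕ) (a b n : ℕ → ℕ)
    (ha : ∀ i, 1 ≤ i → i ≤ p → 2 ≤ a i ∧ a i < b i)
    (hab : ∀ i j, 1 ≤ j → j ≤ i → i ≤ p → Nat.gcd (a i) (b j) = 1)
    (hn : ∀ i, i ≤ p → n i = (∏ j ∈ Finset.Icc 1 i, b j) * ∏ j ∈ Finset.Icc (i+1) p, a j)
    (i : ℕ) (hip : i ≤ p) (u v : ℕ → ℕ)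
    (hu1 : ∀ j, j < i → u j < b (j+1)) (hu2 : ∀ j, i < j → j ≤ p → u j < a j)
    (hv1 : ∀ j, j < i → v j < b (j+1)) (hv2 : ∀ j, i < j → j ≤ p → v j < a j)
    (hsum : ∑ j ∈ range (p+1), u j * n j = ∑ j ∈ range (p+1), v j * n j) :
    ∀ j, j ≤ p → u j = v j := by
  have stepU : ∀ j, i < j → j ≤ p → (∀ j', j < j' → j' ≤ p → u j' = v j') → u j = v j := by
    intro j hij hjp IH
    have htail : ∑ k ∈ Ico (j+1) (p+1), u k * n k = ∑ k ∈ Ico (j+1) (p+1), v k * n k := by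
      apply Finset.sum_congr rfl
      intro k hk
      have hk' := Finset.mem_Ico.mp hk
      rw [IH k (by omega) (by omega)]
    have hhead : ∑ k ∈ range (j+1), u k * n k = ∑ k ∈ range (j+1), v k * n k := by
      have h1 : ∑ k ∈ range (j+1), u k * n k + ∑ k ∈ Ico (j+1) (p+1), u k * n k
          = ∑ k ∈ range (p+1), u k * n k := by
        rw [Finset.range_eq_Ico, Finset.range_eq_Ico]
        exact Finset.sum_Ico_consecutive _ (by omega) (by omega)
      have h2 : ∑ k ∈ range (j+1), v k * n k + ∑ k ∈ Ico (j+1) (p+1), v k * n k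
          = ∑ k ∈ range (p+1), v k * n k := by
        rw [Finset.range_eq_Ico, Finset.range_eq_Ico]
        exact Finset.sum_Ico_consecutive _ (by omega) (by omega)
      omega
    have hcast : ((u j : ℤ) - v j) * n j = ∑ k ∈ range j, ((v k : ℤ) - u k) * n k := by
      have h3 : ∑ k ∈ range j, u k * n k + u j * n j
          = ∑ k ∈ range j, v k * n k + v j * n j := by
        rw [← Finset.sum_range_succ, ← Finset.sum_range_succ]; exact hhead
      have h4 := congrArg (fun z : ℕ => (z : ℤ)) h3
      push_cast at h4
      have h6 : ∑ k ∈ range j, ((v k : ℤ) - u k) * n k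
          = ∑ k ∈ range j, (v k : ℤ) * n k - ∑ k ∈ range j, (u k : ℤ) * n k := by
        rw [← Finset.sum_sub_distrib]
        apply Finset.sum_congr rfl
        intro k _
        ring
      have h5 : ((u j : ℤ) - v j) * n j = (u j : ℤ) * n j - (v j : ℤ) * n j := by ring
      rw [h5, h6]
      linarith
    have hD0 : 0 < ∏ k ∈ Icc (j+1) p, a k := by
      apply Finset.prod_pos
      intro m hm
      obtain ⟨h1, h2⟩ := Finset.mem_Icc.mp hm
      have := ha m (by omega) h2
      omega
    have hdvd : ((a j : ℤ) * (∏ k ∈ Icc (j+1) p, a k : ℕ)) ∣ ((u j : ℤ) - v j) * n j := by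
      rw [hcast]
      apply Finset.dvd_sum
      intro k hk
      have hkj : k < j := mem_range.mp hk
      have hnat : (a j * ∏ k ∈ Icc (j+1) p, a k : ℕ) ∣ n k := by
        rw [hn k (by omega)]
        apply Dvd.dvd.mul_left
        rw [← aux_prod_cons a hjp]
        exact Finset.prod_dvd_prod_of_subset _ _ a (Finset.Icc_subset_Icc (by omega) le_rfl)
      have hint : ((a j : ℤ) * ((∏ k ∈ Icc (j+1) p, a k : ℕ) : ℤ)) ∣ (n k : ℤ) := by
        exact_mod_cast Int.natCast_dvd_natCast.mpr hnat
      exact Dvd.dvd.mul_left hint _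
    have hnj : (n j : ℤ) = ((∏ k ∈ Icc 1 j, b k : ℕ) : ℤ) * ((∏ k ∈ Icc (j+1) p, a k : ℕ) : ℤ) := by
      rw [hn j hjp]; push_cast; ring
    have hdvd2 : (a j : ℤ) ∣ ((u j : ℤ) - v j) * ((∏ k ∈ Icc 1 j, b k : ℕ) : ℤ) := by
      have h7 : ((u j : ℤ) - v j) * n j
          = (((u j : ℤ) - v j) * ((∏ k ∈ Icc 1 j, b k : ℕ) : ℤ))
            * ((∏ k ∈ Icc (j+1) p, a k : ℕ) : ℤ) := by
        rw [hnj]; ring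
      rw [h7] at hdvd
      exact (mul_dvd_mul_iff_right (by exact_mod_cast hD0.ne' : ((∏ k ∈ Icc (j+1) p, a k : ℕ) : ℤ) ≠ 0)).mp hdvd
    have hcop : IsCoprime ((a j : ℤ)) (((∏ k ∈ Icc 1 j, b k : ℕ) : ℤ)) := by
      apply Nat.isCoprime_iff_coprime.mpr
      apply Nat.Coprime.prod_right
      intro m hm
      obtain ⟨h1, h2⟩ := Finset.mem_Icc.mp hm
      exact hab j m h1 h2 hjp
    have hdvdfin : (a j : ℤ) ∣ (u j : ℤ) - v j := hcop.dvd_of_dvd_mul_right hdvd2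
    have hb1 : u j < a j := hu2 j hij hjp
    have hb2 : v j < a j := hv2 j hij hjp
    have hz := Int.eq_zero_of_abs_lt_dvd hdvdfin (by rw [abs_lt]; omega)
    omega
  have hupper : ∀ j, i < j → j ≤ p → u j = v j := by
    have H : ∀ d j, i < j → j ≤ p → p - j ≤ d → u j = v j := by
      intro d
      induction d with
      | zero =>
        intro j h1 h2 h3
        exact stepU j h1 h2 (fun j' h1' h2' => absurd h2' (by omega))
      | succ d ih =>
        intro j h1 h2 h3
        exact stepU j h1 h2 (fun j' h1' h2' => ih j' (by omega) h2' (by omega))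
    intro j h1 h2
    exact H p j h1 h2 (by omega)
  have stepL : ∀ j, j < i → (∀ k, k < j → u k = v k) → u j = v j := by
    intro j hji IH
    have hjp : j < p := by omega
    have hhead : ∑ k ∈ range j, u k * n k = ∑ k ∈ range j, v k * n k := by
      apply Finset.sum_congr rfl
      intro k hk
      rw [IH k (mem_range.mp hk)]
    have htail : ∑ k ∈ Ico j (p+1), u k * n k = ∑ k ∈ Ico j (p+1), v k * n k := by
      have h1 : ∑ k ∈ range j, u k * n k + ∑ k ∈ Ico j (p+1), u k * n k
          = ∑ k ∈ range (p+1), u k * n k := by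
        rw [Finset.range_eq_Ico, Finset.range_eq_Ico]
        exact Finset.sum_Ico_consecutive _ (by omega) (by omega)
      have h2 : ∑ k ∈ range j, v k * n k + ∑ k ∈ Ico j (p+1), v k * n k
          = ∑ k ∈ range (p+1), v k * n k := by
        rw [Finset.range_eq_Ico, Finset.range_eq_Ico]
        exact Finset.sum_Ico_consecutive _ (by omega) (by omega)
      omega
    have hsplitu := Finset.sum_eq_sum_Ico_succ_bot (by omega : j < p+1) (fun k => u k * n k)
    have hsplitv := Finset.sum_eq_sum_Ico_succ_bot (by omega : j < p+1) (fun k => v k * n k)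
    rw [hsplitu, hsplitv] at htail
    have hcast : ((u j : ℤ) - v j) * n j = ∑ k ∈ Ico (j+1) (p+1), ((v k : ℤ) - u k) * n k := by
      have h4 := congrArg (fun z : ℕ => (z : ℤ)) htail
      push_cast at h4
      have h6 : ∑ k ∈ Ico (j+1) (p+1), ((v k : ℤ) - u k) * n k
          = ∑ k ∈ Ico (j+1) (p+1), (v k : ℤ) * n k - ∑ k ∈ Ico (j+1) (p+1), (u k : ℤ) * n k := by
        rw [← Finset.sum_sub_distrib]
        apply Finset.sum_congr rfl
        intro k _
        ring
      have h5 : ((u j : ℤ) - v j) * n j = (u j : ℤ) * n j - (v j : ℤ) * n j := by ring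
      rw [h5, h6]
      linarith
    have hB0 : 0 < ∏ k ∈ Icc 1 j, b k := by
      apply Finset.prod_pos
      intro m hm
      obtain ⟨h1, h2⟩ := Finset.mem_Icc.mp hm
      have := ha m h1 (by omega)
      omega
    have hdvd : (((∏ k ∈ Icc 1 j, b k : ℕ) : ℤ) * (b (j+1) : ℤ)) ∣ ((u j : ℤ) - v j) * n j := by
      rw [hcast]
      apply Finset.dvd_sum
      intro k hk
      have hk' := Finset.mem_Ico.mp hk
      have hnat : ((∏ k ∈ Icc 1 j, b k) * b (j+1) : ℕ) ∣ n k := by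
        rw [hn k (by omega)]
        apply Dvd.dvd.mul_right
        rw [← Finset.prod_Icc_succ_top (by omega : 1 ≤ j + 1) b]
        exact Finset.prod_dvd_prod_of_subset _ _ b (Finset.Icc_subset_Icc le_rfl (by omega))
      have hint : (((∏ k ∈ Icc 1 j, b k : ℕ) : ℤ) * (b (j+1) : ℤ)) ∣ (n k : ℤ) := by
        exact_mod_cast Int.natCast_dvd_natCast.mpr hnat
      exact Dvd.dvd.mul_left hint _
    have hnj : (n j : ℤ) = ((∏ k ∈ Icc 1 j, b k : ℕ) : ℤ) * ((∏ k ∈ Icc (j+1) p, a k : ℕ) : ℤ) := by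
      rw [hn j (by omega)]; push_cast; ring
    have hdvd2 : (b (j+1) : ℤ) ∣ ((u j : ℤ) - v j) * ((∏ k ∈ Icc (j+1) p, a k : ℕ) : ℤ) := by
      have h7 : ((u j : ℤ) - v j) * n j
          = ((∏ k ∈ Icc 1 j, b k : ℕ) : ℤ)
            * (((u j : ℤ) - v j) * ((∏ k ∈ Icc (j+1) p, a k : ℕ) : ℤ)) := by
        rw [hnj]; ring
      rw [h7] at hdvd
      exact (mul_dvd_mul_iff_left (by exact_mod_cast hB0.ne' : ((∏ k ∈ Icc 1 j, b k : ℕ) : ℤ) ≠ 0)).mp hdvd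
    have hcop : IsCoprime ((b (j+1) : ℤ)) (((∏ k ∈ Icc (j+1) p, a k : ℕ) : ℤ)) := by
      apply Nat.isCoprime_iff_coprime.mpr
      apply Nat.Coprime.prod_right
      intro m hm
      obtain ⟨h1, h2⟩ := Finset.mem_Icc.mp hm
      exact Nat.Coprime.symm (hab m (j+1) (by omega) h1 h2)
    have hdvdfin : (b (j+1) : ℤ) ∣ (u j : ℤ) - v j := hcop.dvd_of_dvd_mul_right hdvd2
    have hb1 : u j < b (j+1) := hu1 j hji
    have hb2 : v j < b (j+1) := hv1 j hji
    have hz := Int.eq_zero_of_abs_lt_dvd hdvdfin (by rw [abs_lt]; omega)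
    omega
  have hlow : ∀ j, j < i → u j = v j := by
    intro j
    induction j using Nat.strong_induction_on with
    | _ j ih => exact fun hji => stepL j hji (fun k hk => ih k hk (by omega))
  intro j hjp
  rcases lt_trichotomy j i with h | h | h
  · exact hlow j h
  · subst h
    have he : ∑ k ∈ (range (p+1)).erase j, u k * n k
        = ∑ k ∈ (range (p+1)).erase j, v k * n k := by
      apply Finset.sum_congr rfl
      intro k hk
      have hk1 : k ≠ j := Finset.ne_of_mem_erase hk
      have hk2 := mem_range.mp (Finset.mem_of_mem_erase hk)
      rcases lt_or_gt_of_ne hk1 with h' | h'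
      · rw [hlow k h']
      · rw [hupper k h' (by omega)]
    have h8 : u j * n j + ∑ k ∈ (range (p+1)).erase j, u k * n k
        = ∑ k ∈ range (p+1), u k * n k :=
      Finset.add_sum_erase _ (fun k => u k * n k) (mem_range.mpr (by omega : j < p+1))
    have h9 : v j * n j + ∑ k ∈ (range (p+1)).erase j, v k * n k
        = ∑ k ∈ range (p+1), v k * n k :=
      Finset.add_sum_erase _ (fun k => v k * n k) (mem_range.mpr (by omega : j < p+1))
    have hmul : u j * n j = v j * n j := by omega
    exact Nat.eq_of_mul_eq_mul_right (aux_npos p a b n ha hn hjp) hmul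
  · exact hupper j h hjp

theorem stmt16 (p : ℕ) (hp : 1 ≤ p) (a b : ℕ → ℕ)
    (ha : ∀ i, 1 ≤ i → i ≤ p → 2 ≤ a i ∧ a i < b i)
    (hab : ∀ i j, 1 ≤ j → j ≤ i → i ≤ p → Nat.gcd (a i) (b j) = 1)
    (n : ℕ → ℕ)
    (hn : ∀ i, i ≤ p → n i = (∏ j ∈ Finset.Icc 1 i, b j) * ∏ j ∈ Finset.Icc (i+1) p, a j)
    (i : ℕ) (hip : i ≤ p) :
    {m : ℕ | (∃ x : ℕ → ℕ, ∑ j ∈ Finset.range (p+1), x j * n j = m) ∧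
        ¬∃ k : ℕ, (∃ x : ℕ → ℕ, ∑ j ∈ Finset.range (p+1), x j * n j = k) ∧
          k + n i = m} =
    {m : ℕ | ∃ u : ℕ → ℕ, (∀ j, j < i → u j < b (j+1)) ∧ u i = 0 ∧
        (∀ j, i < j → j ≤ p → u j < a j) ∧ (∀ j, p < j → u j = 0) ∧
        ∑ j ∈ Finset.range (p+1), u j * n j = m} := by
  ext m
  simp only [Set.mem_setOf_eq]
  constructor
  · rintro ⟨⟨x, hx⟩, hnk⟩
    obtain ⟨u, hu1, hu2, hu3, hu4⟩ := aux_exists p a b n ha hn i hip x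
    rw [hx] at hu4
    by_cases hui : u i = 0
    · exact ⟨u, hu1, hui, hu2, hu3, hu4⟩
    · exfalso
      apply hnk
      refine ⟨∑ j ∈ range (p+1), (if j = i then u i - 1 else u j) * n j,
        ⟨fun j => if j = i then u i - 1 else u j, rfl⟩, ?_⟩
      have h8 : (if i = i then u i - 1 else u i) * n i
          + ∑ k ∈ (range (p+1)).erase i, (if k = i then u i - 1 else u k) * n k
          = ∑ k ∈ range (p+1), (if k = i then u i - 1 else u k) * n k :=
        Finset.add_sum_erase _ (fun k => (if k = i then u i - 1 else u k) * n k)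
          (mem_range.mpr (by omega : i < p+1))
      rw [if_pos rfl] at h8
      have h9 : u i * n i + ∑ k ∈ (range (p+1)).erase i, u k * n k
          = ∑ k ∈ range (p+1), u k * n k :=
        Finset.add_sum_erase _ (fun k => u k * n k) (mem_range.mpr (by omega : i < p+1))
      have he : ∑ k ∈ (range (p+1)).erase i, (if k = i then u i - 1 else u k) * n k
          = ∑ k ∈ (range (p+1)).erase i, u k * n k := by
        apply Finset.sum_congr rfl
        intro k hk
        rw [if_neg (Finset.ne_of_mem_erase hk)]
      have hni : (u i - 1) * n i + n i = u i * n i := by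
        have hgt : u i - 1 + 1 = u i := by omega
        calc (u i - 1) * n i + n i = (u i - 1 + 1) * n i := by ring
          _ = u i * n i := by rw [hgt]
      omega
  · rintro ⟨u, hu1, hui, hu2, hu3, husum⟩
    refine ⟨⟨u, husum⟩, ?_⟩
    rintro ⟨k, ⟨x, hxk⟩, hk⟩
    obtain ⟨v, hv1, hv2, hv3, hv4⟩ := aux_exists p a b n ha hn i hip x
    rw [hxk] at hv4
    have hw1 : ∀ j, j < i → (if j = i then v i + 1 else v j) < b (j+1) := by
      intro j hj
      rw [if_neg (by omega : j ≠ i)]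
      exact hv1 j hj
    have hw2 : ∀ j, i < j → j ≤ p → (if j = i then v i + 1 else v j) < a j := by
      intro j h1 h2
      rw [if_neg (by omega : j ≠ i)]
      exact hv2 j h1 h2
    have hwsum : ∑ j ∈ range (p+1), u j * n j
        = ∑ j ∈ range (p+1), (if j = i then v i + 1 else v j) * n j := by
      have h8 : (if i = i then v i + 1 else v i) * n i
          + ∑ k ∈ (range (p+1)).erase i, (if k = i then v i + 1 else v k) * n k
          = ∑ k ∈ range (p+1), (if k = i then v i + 1 else v k) * n k :=
        Finset.add_sum_erase _ (fun k => (if k = i then v i + 1 else v k) * n k)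
          (mem_range.mpr (by omega : i < p+1))
      rw [if_pos rfl] at h8
      have h9 : v i * n i + ∑ k ∈ (range (p+1)).erase i, v k * n k
          = ∑ k ∈ range (p+1), v k * n k :=
        Finset.add_sum_erase _ (fun k => v k * n k) (mem_range.mpr (by omega : i < p+1))
      have he : ∑ k ∈ (range (p+1)).erase i, (if k = i then v i + 1 else v k) * n k
          = ∑ k ∈ (range (p+1)).erase i, v k * n k := by
        apply Finset.sum_congr rfl
        intro k hk
        rw [if_neg (Finset.ne_of_mem_erase hk)]
      have hvi : (v i + 1) * n i = v i * n i + n i := by ring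
      omega
    have huniq := aux_unique p a b n ha hab hn i hip u
      (fun j => if j = i then v i + 1 else v j) hu1 hu2 hw1 hw2 hwsum
    have hcontra := huniq i hip
    rw [if_pos rfl] at hcontra
    omega
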